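/- Let S = ℙ¹ × ℙ¹ and β = O(a₁, a₂) with a₁, a₂ > 0. Then the codimension of the locus of non-integral curves in |β| equals min{a₁, a₂}. -/
import Mathlib

lemma stmt14_aux (c₁ c₂ d₁ d₂ : ℕ) (hc : c₁ ≠ 0 ∨ c₂ ≠ 0) (hd : d₁ ≠ 0 ∨ d₂ ≠ 0) :
    min (c₁ + d₁) (c₂ + d₂) ≤ c₁ * d₂ + c₂ * d₁ := by
  rcases Nat.eq_zero_or_pos c₁ with h1 | h1
  · have hc2 : 1 ≤ c₂ := by omega
    have : min (c₁ + d₁) (c₂ + d₂) ≤ d₁ := by omega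
    calc min (c₁ + d₁) (c₂ + d₂) ≤ d₁ := this
      _ ≤ c₁ * d₂ + c₂ * d₁ := by nlinarith
  · rcases Nat.eq_zero_or_pos d₁ with h2 | h2
    · have hd2 : 1 ≤ d₂ := by omega
      have : min (c₁ + d₁) (c₂ + d₂) ≤ c₁ := by omega
      calc min (c₁ + d₁) (c₂ + d₂) ≤ c₁ := this
        _ ≤ c₁ * d₂ + c₂ * d₁ := by nlinarith
    · calc min (c₁ + d₁) (c₂ + d₂) ≤ c₂ + d₂ := min_le_right _ _
        _ ≤ c₁ * d₂ + c₂ * d₁ := by nlinarith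

/-- On S = ℙ¹ × ℙ¹ with β = O(a₁,a₂), a₁,a₂ > 0, the codimension of
the non-integral locus in |β| equals min{a₁,a₂}. Here dim|O(b₁,b₂)| =
(b₁+1)(b₂+1) − 1, and the non-integral locus is the union of the images of
|β₁| × |β₂| over nontrivial effective decompositions β = β₁ + β₂, so its
codimension is dim|β| minus the supremum of dim|β₁| + dim|β₂|. -/
theorem stmt14 (a₁ a₂ : ℕ) (h₁ : 0 < a₁) (h₂ : 0 < a₂)
    (dimLS : ℕ × ℕ → ℤ)
    (hdim : ∀ b : ℕ × ℕ, dimLS b = ((b.1 : ℤ) + 1) * ((b.2 : ℤ) + 1) - 1) :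
    dimLS (a₁, a₂) -
      sSup {x : ℤ | ∃ β₁ β₂ : ℕ × ℕ, β₁ ≠ 0 ∧ β₂ ≠ 0 ∧
        β₁ + β₂ = (a₁, a₂) ∧ x = dimLS β₁ + dimLS β₂} =
      min (a₁ : ℤ) (a₂ : ℤ) := by
  have hmin : min (a₁ : ℤ) (a₂ : ℤ) = ((min a₁ a₂ : ℕ) : ℤ) := by
    rcases le_total a₁ a₂ with h | h
    · rw [min_eq_left (by exact_mod_cast h), min_eq_left h]
    · rw [min_eq_right (by exact_mod_cast h), min_eq_right h]
  set S := {x : ℤ | ∃ β₁ β₂ : ℕ × ℕ, β₁ ≠ 0 ∧ β₂ ≠ 0 ∧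
        β₁ + β₂ = (a₁, a₂) ∧ x = dimLS β₁ + dimLS β₂} with hS
  have hsup : sSup S = dimLS (a₁, a₂) - ((min a₁ a₂ : ℕ) : ℤ) := by
    apply IsGreatest.csSup_eq
    constructor
    · -- membership: the witness achieving the max
      rcases le_total a₁ a₂ with h | h
      · refine ⟨(0, 1), (a₁, a₂ - 1), ?_, ?_, ?_, ?_⟩
        · simp [Prod.ext_iff]
        · intro hz
          rw [Prod.ext_iff] at hz
          simp only [Prod.fst_zero, Prod.snd_zero] at hz
          omega
        · simp only [Prod.mk_add_mk, Prod.mk.injEq]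
          omega
        · rw [hdim, hdim, hdim]
          have h2 : ((a₂ - 1 : ℕ) : ℤ) = (a₂ : ℤ) - 1 := by
            have := Nat.cast_sub h₂ (R := ℤ)
            simpa using this
          simp only [h2, min_eq_left h]
          push_cast
          ring
      · refine ⟨(1, 0), (a₁ - 1, a₂), ?_, ?_, ?_, ?_⟩
        · simp [Prod.ext_iff]
        · intro hz
          rw [Prod.ext_iff] at hz
          simp only [Prod.fst_zero, Prod.snd_zero] at hz
          omega
        · simp only [Prod.mk_add_mk, Prod.mk.injEq]
          omega
        · rw [hdim, hdim, hdim]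
          have h2 : ((a₁ - 1 : ℕ) : ℤ) = (a₁ : ℤ) - 1 := by
            have := Nat.cast_sub h₁ (R := ℤ)
            simpa using this
          simp only [h2, min_eq_right h]
          push_cast
          ring
    · rintro x ⟨⟨c₁, c₂⟩, ⟨d₁, d₂⟩, hc, hd, hadd, hx⟩
      rw [Prod.ext_iff] at hadd
      obtain ⟨ha1, ha2⟩ := hadd
      simp only [Prod.fst, Prod.snd] at ha1 ha2
      have hc' : c₁ ≠ 0 ∨ c₂ ≠ 0 := by
        by_contra hcon
        push_neg at hcon
        exact hc (by rw [Prod.ext_iff]; exact ⟨hcon.1, hcon.2⟩)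
      have hd' : d₁ ≠ 0 ∨ d₂ ≠ 0 := by
        by_contra hcon
        push_neg at hcon
        exact hd (by rw [Prod.ext_iff]; exact ⟨hcon.1, hcon.2⟩)
      have key := stmt14_aux c₁ c₂ d₁ d₂ hc' hd'
      have ha1' : c₁ + d₁ = a₁ := ha1
      have ha2' : c₂ + d₂ = a₂ := ha2
      have keyZ : ((min a₁ a₂ : ℕ) : ℤ) ≤ (c₁ : ℤ) * d₂ + (c₂ : ℤ) * d₁ := by
        rw [← ha1', ← ha2']
        exact_mod_cast key
      rw [hx, hdim, hdim, hdim]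
      simp only [← ha1', ← ha2']
      push_cast
      nlinarith [keyZ]
  rw [hsup, hmin]
  ring
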